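/- arXiv:1605.03546 — 2 statements merged into one kernel-verified Lean document; each statement's English description precedes it below -/
import Mathlib

section
/- During a pebbled simulation of the run, flow conservation of remaining pebbles holds at every vertex except d and the current vertex, where the outgoing pebble count exceeds the incoming pebble count by exactly one; and at every vertex v, the pebble counts on the two outgoing edges (v,s₀(v)) and (v,s₁(v)) differ by at most one, with never the odd edge having been traversed more often than the even edge. -/
open scoped Classical

/-- A switch graph: every vertex has an even successor `s0 v` and an odd successor `s1 v`. -/
structure SwitchGraph (V : Type) where
  s0 : V → V
  s1 : V → V

namespace SwitchGraph

variable {V : Type}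

/-- The successor of `v` along the edge of parity `b` (`false` = even, `true` = odd). -/
def succ (G : SwitchGraph V) (v : V) (b : Bool) : V :=
  if b then G.s1 v else G.s0 v

/-- One step of the run: move to the currently active successor and flip the switch. -/
def step [DecidableEq V] (G : SwitchGraph V) (p : V × (V → Bool)) : V × (V → Bool) :=
  (G.succ p.1 (p.2 p.1), Function.update p.2 p.1 (!p.2 p.1))

/-- The state of the run after `n` steps, starting at `o` with all switches even,
stopping (freezing) upon reaching `d`. -/
def run [DecidableEq V] (G : SwitchGraph V) (o d : V) (n : ℕ) : V × (V → Bool) :=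
  (fun p => if p.1 = d then p else G.step p)^[n] (o, fun _ => false)

/-- The run from `o` terminates at `d`. -/
def Terminates [DecidableEq V] (G : SwitchGraph V) (o d : V) : Prop :=
  ∃ n, (G.run o d n).1 = d

/-- Number of traversals of the outgoing edge of `v` of parity `b` during
the first `N` steps of the run. -/
def traversals [DecidableEq V] (G : SwitchGraph V) (o d : V) (N : ℕ) (v : V) (b : Bool) : ℕ :=
  ((Finset.range N).filter
    (fun n => (G.run o d n).1 = v ∧ v ≠ d ∧ (G.run o d n).2 v = b)).card

/-- Total weight on edges leaving `v`. -/
def outflow {M : Type} [AddCommMonoid M] (x : V → Bool → M) (v : V) : M :=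
  x v false + x v true

/-- Total weight on edges entering `v`. -/
def inflow [Fintype V] [DecidableEq V] (G : SwitchGraph V) {M : Type} [AddCommMonoid M]
    (x : V → Bool → M) (v : V) : M :=
  ∑ u : V, ∑ b : Bool, if G.succ u b = v then x u b else 0

/-- A switching flow: flow conservation of value 1 from `o` to `d`, together with the
balancing condition `x v true ≤ x v false ≤ x v true + 1` at every vertex. -/
def IsSwitchingFlow [Fintype V] [DecidableEq V] (G : SwitchGraph V) (o d : V)
    (x : V → Bool → ℕ) : Prop :=
  (∀ v, outflow x v + (if v = d then 1 else 0) = G.inflow x v + (if v = o then 1 else 0)) ∧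
  (∀ v, x v true ≤ x v false ∧ x v false ≤ x v true + 1)

/-- The edge relation of the underlying directed graph `(V, E)`. -/
def stepRel (G : SwitchGraph V) (a b : V) : Prop :=
  G.s0 a = b ∨ G.s1 a = b

/-- A dead end: a vertex with no directed path to `d` in `(V, E)`. -/
def DeadEnd (G : SwitchGraph V) (d w : V) : Prop :=
  ¬ Relation.ReflTransGen G.stepRel w d

/-- There is a directed walk of length `k` from `w` to `d` in `(V, E)`. -/
def Chain (G : SwitchGraph V) (w d : V) (k : ℕ) : Prop :=
  ∃ f : ℕ → V, f 0 = w ∧ f k = d ∧ ∀ i < k, G.stepRel (f i) (f (i + 1))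

end SwitchGraph

open SwitchGraph

namespace SwitchGraph

variable {V : Type} [DecidableEq V] (G : SwitchGraph V) (o d : V)

lemma run_zero : G.run o d 0 = (o, fun _ => false) := rfl

lemma run_succ (n : ℕ) :
    G.run o d (n + 1) = if (G.run o d n).1 = d then G.run o d n else G.step (G.run o d n) := by
  simp only [run, Function.iterate_succ_apply']
  rfl

lemma traversals_zero (v : V) (b : Bool) : G.traversals o d 0 v b = 0 := by
  simp [traversals]

lemma traversals_succ (N : ℕ) (v : V) (b : Bool) :
    G.traversals o d (N + 1) v b = G.traversals o d N v b +
      (if (G.run o d N).1 = v ∧ v ≠ d ∧ (G.run o d N).2 v = b then 1 else 0) := by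
  unfold traversals
  rw [Finset.range_add_one, Finset.filter_insert]
  split
  · rw [Finset.card_insert_of_notMem (by simp)]
  · simp

lemma switch_inv (N : ℕ) (v : V) :
    G.traversals o d N v false = G.traversals o d N v true + ((G.run o d N).2 v).toNat := by
  induction N with
  | zero => simp [traversals_zero, run_zero]
  | succ N ih =>
    rw [traversals_succ, traversals_succ, run_succ]
    by_cases hd : (G.run o d N).1 = d
    · rw [if_pos hd]
      have h1 : ¬((G.run o d N).1 = v ∧ v ≠ d ∧ (G.run o d N).2 v = false) := by
        rintro ⟨h, h2, -⟩; exact h2 (h ▸ hd)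
      have h2 : ¬((G.run o d N).1 = v ∧ v ≠ d ∧ (G.run o d N).2 v = true) := by
        rintro ⟨h, h2, -⟩; exact h2 (h ▸ hd)
      simp [h1, h2, ih]
    · rw [if_neg hd]
      by_cases ha : (G.run o d N).1 = v
      · have hvd : v ≠ d := fun h => hd (ha.trans h)
        have hupd : (G.step (G.run o d N)).2 v
            = !((G.run o d N).2 v) := by
          simp [step, ha, Function.update]
        rw [hupd]
        cases hc : (G.run o d N).2 v <;>
          simp [ha, hvd, hc, ih] <;> omega
      · have hupd : (G.step (G.run o d N)).2 v = (G.run o d N).2 v :=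
          Function.update_of_ne (fun h => ha h.symm) _ _
        simp [hupd, ha, ih]

lemma trav_bal (N : ℕ) (v : V) :
    G.traversals o d N v true ≤ G.traversals o d N v false ∧
      G.traversals o d N v false ≤ G.traversals o d N v true + 1 := by
  have h := G.switch_inv o d N v
  cases hc : (G.run o d N).2 v <;> rw [hc] at h <;> simp at h <;> omega

variable [Fintype V]

lemma inflow_sub (x y : V → Bool → ℤ) (v : V) :
    G.inflow (fun u b => x u b - y u b) v = G.inflow x v - G.inflow y v := by
  unfold inflow
  rw [← Finset.sum_sub_distrib]
  refine Finset.sum_congr rfl fun u _ => ?_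
  rw [← Finset.sum_sub_distrib]
  refine Finset.sum_congr rfl fun b _ => ?_
  split <;> simp

lemma inflow_cast (x : V → Bool → ℕ) (v : V) :
    G.inflow (fun u b => (x u b : ℤ)) v = ((G.inflow x v : ℕ) : ℤ) := by
  unfold inflow
  push_cast
  rfl

/-- Key counting identity: for `v ≠ d`, the net traversal outflow minus inflow at `v`
equals `[v = o] - [v = current]`. -/
lemma counting (N : ℕ) (v : V) (hv : v ≠ d) :
    ((G.traversals o d N v false : ℤ) + G.traversals o d N v true)
      - G.inflow (fun u b => (G.traversals o d N u b : ℤ)) v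
    = (if o = v then 1 else 0) - (if (G.run o d N).1 = v then 1 else 0) := by
  induction N with
  | zero =>
    simp [traversals_zero, inflow, run_zero]
    exact (sub_self _).symm
  | succ N ih =>
    have hδ : G.inflow (fun u b => ((G.traversals o d (N + 1) u b : ℤ)))
        = G.inflow (fun u b => (G.traversals o d N u b : ℤ) +
            (if (G.run o d N).1 = u ∧ u ≠ d ∧ (G.run o d N).2 u = b then 1 else 0)) := by
      funext w
      congr 1
      funext u b
      rw [traversals_succ]
      push_cast
      ring
    rw [hδ]
    have hadd : ∀ (x y : V → Bool → ℤ) (w : V),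
        G.inflow (fun u b => x u b + y u b) w = G.inflow x w + G.inflow y w := by
      intro x y w
      unfold inflow
      rw [← Finset.sum_add_distrib]
      refine Finset.sum_congr rfl fun u _ => ?_
      rw [← Finset.sum_add_distrib]
      refine Finset.sum_congr rfl fun b _ => ?_
      split <;> simp
    rw [hadd, traversals_succ, traversals_succ, run_succ]
    by_cases hd : (G.run o d N).1 = d
    · rw [if_pos hd]
      have hz : G.inflow (fun u b =>
          ((if (G.run o d N).1 = u ∧ u ≠ d ∧ (G.run o d N).2 u = b then 1 else 0) : ℤ)) v
          = 0 := by
        unfold inflow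
        refine Finset.sum_eq_zero fun u _ => Finset.sum_eq_zero fun b _ => ?_
        have : ¬((G.run o d N).1 = u ∧ u ≠ d ∧ (G.run o d N).2 u = b) := by
          rintro ⟨h, h2, -⟩; exact h2 (h ▸ hd)
        simp [this]
      have h1 : ¬((G.run o d N).1 = v ∧ v ≠ d ∧ (G.run o d N).2 v = false) := by
        rintro ⟨h, h2, -⟩; exact h2 (h ▸ hd)
      have h2 : ¬((G.run o d N).1 = v ∧ v ≠ d ∧ (G.run o d N).2 v = true) := by
        rintro ⟨h, h2, -⟩; exact h2 (h ▸ hd)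
      rw [hz]
      push_cast
      simp only [h1, h2, if_false]
      linarith [ih]
    · rw [if_neg hd]
      set a := (G.run o d N).1 with ha
      set c := (G.run o d N).2 a with hc
      have hstep : (G.step (G.run o d N)).1 = G.succ a c := rfl
      have hz : G.inflow (fun u b =>
          ((if (G.run o d N).1 = u ∧ u ≠ d ∧ (G.run o d N).2 u = b then 1 else 0) : ℤ)) v
          = if G.succ a c = v then 1 else 0 := by
        unfold inflow
        rw [Finset.sum_eq_single a (fun u _ hu => by
          refine Finset.sum_eq_zero fun b _ => ?_
          have : ¬((G.run o d N).1 = u ∧ u ≠ d ∧ (G.run o d N).2 u = b) := by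
            rintro ⟨h, -, -⟩; exact hu (h.symm.trans ha.symm ▸ rfl)
          simp [this]) (fun h => absurd (Finset.mem_univ a) h)]
        rw [Fintype.sum_bool]
        cases hcc : c <;>
          simp [← ha, ← hc, hcc, hd] <;> split <;> simp
      rw [hz, hstep]
      push_cast
      have hδ2 : (if (a = v ∧ v ≠ d ∧ (G.run o d N).2 v = false) then (1 : ℤ) else 0)
          + (if (a = v ∧ v ≠ d ∧ (G.run o d N).2 v = true) then (1 : ℤ) else 0)
          = (if a = v then 1 else 0) := by
        by_cases hav : a = v
        · have hvd : v ≠ d := fun h => hd ((ha.symm.trans hav).trans h)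
          cases hsw : (G.run o d N).2 v <;> simp [hav, hvd, hsw]
        · simp [hav]
      linarith [ih, hδ2]

end SwitchGraph

/-- Pebble invariants: with `x(e)` pebbles per edge and one pebble collected per traversal,
flow conservation of remaining pebbles holds except at `d` and at the current vertex (which
has one extra outgoing pebble); moreover the remaining pebbles on the two outgoing edges of
any vertex differ by at most one, and the odd edge is never traversed more often than the
even edge. -/
theorem stmt6 {V : Type} [Fintype V] [DecidableEq V] (G : SwitchGraph V) (o d : V)
    (hod : o ≠ d) (x : V → Bool → ℕ) (hx : G.IsSwitchingFlow o d x) (N : ℕ) :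
    (∀ v, v ≠ d → v ≠ (G.run o d N).1 →
      outflow (fun u b => (x u b : ℤ) - G.traversals o d N u b) v
        = G.inflow (fun u b => (x u b : ℤ) - G.traversals o d N u b) v) ∧
    ((G.run o d N).1 ≠ d →
      outflow (fun u b => (x u b : ℤ) - G.traversals o d N u b) (G.run o d N).1
        = G.inflow (fun u b => (x u b : ℤ) - G.traversals o d N u b) (G.run o d N).1 + 1) ∧
    (∀ v, |((x v false : ℤ) - G.traversals o d N v false)
            - ((x v true : ℤ) - G.traversals o d N v true)| ≤ 1 ∧
      G.traversals o d N v true ≤ G.traversals o d N v false) := by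
  have key : ∀ v : V, v ≠ d →
      outflow (fun u b => (x u b : ℤ) - G.traversals o d N u b) v
        = G.inflow (fun u b => (x u b : ℤ) - G.traversals o d N u b) v
          + (if (G.run o d N).1 = v then 1 else 0) := by
    intro v hv
    rw [G.inflow_sub, G.inflow_cast]
    have hcons := hx.1 v
    have hcount := G.counting o d N v hv
    have hxz : ((outflow x v : ℕ) : ℤ) + (if v = d then 1 else 0)
        = ((G.inflow x v : ℕ) : ℤ) + (if v = o then 1 else 0) := by
      exact_mod_cast congrArg (Nat.cast : ℕ → ℤ) hcons
    simp only [outflow] at hxz ⊢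
    have e1 : (if v = d then (1 : ℤ) else 0) = 0 := by simp [hv]
    have e2 : (if v = o then (1 : ℤ) else 0) = (if o = v then 1 else 0) := by
      rcases eq_or_ne v o with h | h
      · simp [h]
      · simp [h, Ne.symm h]
    rw [e1, e2] at hxz
    push_cast at hxz ⊢
    linarith [hcount, hxz]
  refine ⟨fun v hvd hvc => ?_, fun hc => ?_, fun v => ?_⟩
  · have := key v hvd
    rw [this, if_neg (fun h => hvc h.symm), add_zero]
  · have := key (G.run o d N).1 hc
    rwa [if_pos rfl] at this
  · obtain ⟨h1, h2⟩ := hx.2 v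
    obtain ⟨h3, h4⟩ := G.trav_bal o d N v
    refine ⟨?_, h3⟩
    rw [abs_le]
    constructor <;> push_cast <;> omega
end

section
/- Define the modified switch graph Ḡ by adding a new vertex d̄, redirecting both successors of every dead end w of G to d̄, installing the self-loop s̄₀(d) = s̄₁(d) = d at the old destination d, and leaving all other successors unchanged. Then the run in G from o terminates at d if and only if the run in Ḡ from o does not terminate at d̄. -/
open scoped Classical

open SwitchGraph

section Aux

open SwitchGraph

variable {V : Type} [DecidableEq V] (G : SwitchGraph V) (o d : V)

lemma run_succ' (n : ℕ) :
    G.run o d (n+1) =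
      if (G.run o d n).1 = d then G.run o d n else G.step (G.run o d n) := by
  simp only [SwitchGraph.run, Function.iterate_succ_apply']
  split_ifs with h <;> simp [h]

lemma run_succ_of_ne {n : ℕ} (h : (G.run o d n).1 ≠ d) :
    G.run o d (n+1) = G.step (G.run o d n) := by
  rw [run_succ', if_neg h]

lemma run_frozen {n : ℕ} (h : (G.run o d n).1 = d) :
    ∀ k, G.run o d (n + k) = G.run o d n := by
  intro k
  induction k with
  | zero => rfl
  | succ k ih =>
      have : n + (k + 1) = (n + k) + 1 := rfl
      rw [this, run_succ', ih, if_pos h]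

lemma pos_succ_of_ne {n : ℕ} (h : (G.run o d n).1 ≠ d) :
    (G.run o d (n+1)).1 = G.succ (G.run o d n).1 ((G.run o d n).2 (G.run o d n).1) := by
  rw [run_succ_of_ne G o d h]; rfl

lemma sw_succ_of_ne {n : ℕ} (h : (G.run o d n).1 ≠ d) :
    (G.run o d (n+1)).2 =
      Function.update (G.run o d n).2 (G.run o d n).1 (!(G.run o d n).2 (G.run o d n).1) := by
  rw [run_succ_of_ne G o d h]; rfl

lemma stepRel_run {n : ℕ} (h : (G.run o d n).1 ≠ d) :
    G.stepRel (G.run o d n).1 (G.run o d (n+1)).1 := by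
  rw [pos_succ_of_ne G o d h]
  cases hb : (G.run o d n).2 (G.run o d n).1 with
  | false => exact Or.inl (by simp [SwitchGraph.succ])
  | true => exact Or.inr (by simp [SwitchGraph.succ])

lemma reaches_of_terminates_aux :
    ∀ k n, (G.run o d (n + k)).1 = d →
      Relation.ReflTransGen G.stepRel (G.run o d n).1 d := by
  intro k
  induction k with
  | zero =>
      intro n h
      simp only [Nat.add_zero] at h
      rw [h]
  | succ k ih =>
      intro n h
      by_cases hn : (G.run o d n).1 = d
      · rw [hn]
      · have h' : (G.run o d ((n+1) + k)).1 = d := by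
          have : (n + 1) + k = n + (k + 1) := by omega
          rwa [this]
        exact Relation.ReflTransGen.head (stepRel_run G o d hn) (ih (n+1) h')

/-- A terminating run never visits a dead end. -/
lemma not_deadEnd_of_terminates (ht : G.Terminates o d) (n : ℕ) :
    ¬ G.DeadEnd d (G.run o d n).1 := by
  obtain ⟨N, hN⟩ := ht
  intro hdead
  apply hdead
  rcases le_total n N with h | h
  · exact reaches_of_terminates_aux G o d (N - n) n (by rwa [Nat.add_sub_cancel' h])
  · have : (G.run o d n).1 = d := by
      have := run_frozen G o d hN (n - N)
      rw [Nat.add_sub_cancel' h] at this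
      rw [this]; exact hN
    exact reaches_of_terminates_aux G o d 0 n (by simpa using this)

lemma sw_unchanged {n : ℕ} {v : V} (h : (G.run o d n).1 ≠ v) :
    (G.run o d (n+1)).2 v = (G.run o d n).2 v := by
  by_cases hd : (G.run o d n).1 = d
  · rw [run_succ', if_pos hd]
  · rw [sw_succ_of_ne G o d hd, Function.update_of_ne (Ne.symm h)]

lemma sw_flip {n : ℕ} {v : V} (hv : (G.run o d n).1 = v) (hd : (G.run o d n).1 ≠ d) :
    (G.run o d (n+1)).2 v = !(G.run o d n).2 v := by
  rw [sw_succ_of_ne G o d hd, ← hv, Function.update_self]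

/-- A nonterminating run must reach a dead end. -/
lemma exists_deadEnd_of_not_terminates [Fintype V] (hnt : ¬ G.Terminates o d) :
    ∃ n, G.DeadEnd d (G.run o d n).1 := by
  by_contra hno
  push_neg at hno
  have hnd : ∀ n, (G.run o d n).1 ≠ d := fun n h => hnt ⟨n, h⟩
  have hpath : ∀ n, Relation.ReflTransGen G.stepRel (G.run o d n).1 d :=
    fun n => not_not.mp (hno n)
  -- infinitely visited vertices
  set Inf : V → Prop := fun v => ∀ N, ∃ n, N ≤ n ∧ (G.run o d n).1 = v with hInfdef
  -- pigeonhole: some vertex is infinitely visited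
  have hex : ∃ v, Inf v := by
    obtain ⟨v, hv⟩ := Finite.exists_infinite_fiber (fun n => (G.run o d n).1)
    refine ⟨v, fun N => ?_⟩
    have : ((fun n => (G.run o d n).1) ⁻¹' {v}).Infinite := Set.infinite_coe_iff.mp hv
    obtain ⟨m, hm, hNm⟩ := this.exists_gt N
    exact ⟨m, le_of_lt hNm, hm⟩
  -- both switch states occur infinitely often at an infinitely visited vertex
  have hboth : ∀ v, Inf v → ∀ (bb : Bool) (N : ℕ),
      ∃ n, N ≤ n ∧ (G.run o d n).1 = v ∧ (G.run o d n).2 v = bb := by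
    intro v hv bb N
    obtain ⟨n₁, hn₁N, hn₁⟩ := hv N
    by_cases hb : (G.run o d n₁).2 v = bb
    · exact ⟨n₁, hn₁N, hn₁, hb⟩
    · have hb' : bb = !(G.run o d n₁).2 v := by
        cases bb <;> cases h : (G.run o d n₁).2 v <;> simp_all
      have hexk : ∃ k, (G.run o d (n₁ + 1 + k)).1 = v := by
        obtain ⟨n₂, hn₂ge, hn₂⟩ := hv (n₁ + 1)
        exact ⟨n₂ - (n₁ + 1), by rwa [Nat.add_sub_cancel' hn₂ge]⟩
      set k := Nat.find hexk with hk
      have hkspec : (G.run o d (n₁ + 1 + k)).1 = v := Nat.find_spec hexk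
      have hkmin : ∀ j < k, (G.run o d (n₁ + 1 + j)).1 ≠ v := fun j hj => Nat.find_min hexk hj
      have hsw : ∀ j ≤ k, (G.run o d (n₁ + 1 + j)).2 v = !(G.run o d n₁).2 v := by
        intro j
        induction j with
        | zero =>
            intro _
            exact sw_flip G o d hn₁ (hnd n₁)
        | succ j ih =>
            intro hjk
            have hlt : j < k := lt_of_lt_of_le (Nat.lt_succ_self j) hjk
            have : n₁ + 1 + (j + 1) = (n₁ + 1 + j) + 1 := rfl
            rw [this, sw_unchanged G o d (hkmin j hlt)]
            exact ih (le_of_lt hlt)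
      refine ⟨n₁ + 1 + k, by omega, hkspec, ?_⟩
      rw [hsw k le_rfl, ← hb']
  -- Inf is closed under both successors
  have hclosed : ∀ v u, Inf v → G.stepRel v u → Inf u := by
    intro v u hv hstep N
    have hbb : ∃ bb : Bool, G.succ v bb = u := by
      rcases hstep with h | h
      · exact ⟨false, by simpa [SwitchGraph.succ] using h⟩
      · exact ⟨true, by simpa [SwitchGraph.succ] using h⟩
    obtain ⟨bb, hbb⟩ := hbb
    obtain ⟨n, hnN, hpos, hswv⟩ := hboth v hv bb N
    refine ⟨n + 1, by omega, ?_⟩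
    rw [pos_succ_of_ne G o d (hnd n), hpos, hswv, hbb]
  -- hence d is infinitely visited, contradiction
  obtain ⟨v, hv⟩ := hex
  have key : ∀ x, Relation.ReflTransGen G.stepRel x d → Inf x → Inf d := by
    intro x h
    induction h using Relation.ReflTransGen.head_induction_on with
    | refl => exact id
    | head hstep _ ih => exact fun hx => ih (hclosed _ _ hx hstep)
  have hInfd : Inf d := by
    obtain ⟨n, _, hn⟩ := hv 0
    have hp : Relation.ReflTransGen G.stepRel v d := by rw [← hn]; exact hpath n
    exact key v hp hv
  obtain ⟨n, _, hn⟩ := hInfd 0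
  exact hnd n hn

/-- The mirroring lemma: as long as the original run has met neither `d` nor a dead end,
the modified run mirrors it. -/
lemma mirror (H : SwitchGraph (Option V))
    (h1 : ∀ bb : Bool, H.succ (some d) bb = some d)
    (h3 : ∀ v : V, v ≠ d → ¬ G.DeadEnd d v → ∀ bb, H.succ (some v) bb = some (G.succ v bb))
    (n : ℕ) (hn : ∀ m < n, (G.run o d m).1 ≠ d ∧ ¬ G.DeadEnd d (G.run o d m).1) :
    H.run (some o) none n =
      (some (G.run o d n).1, fun x => Option.elim x false (G.run o d n).2) := by
  clear h1
  induction n with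
  | zero =>
      refine Prod.ext rfl ?_
      funext x
      cases x <;> rfl
  | succ n ih =>
      obtain ⟨hnd, hne⟩ := hn n (Nat.lt_succ_self n)
      have ih' := ih (fun m hm => hn m (hm.trans (Nat.lt_succ_self n)))
      have hHne : (H.run (some o) none n).1 ≠ none := by rw [ih']; simp
      rw [run_succ', if_neg hHne, ih', run_succ_of_ne G o d hnd]
      simp only [SwitchGraph.step, Option.elim]
      refine Prod.ext ?_ ?_
      · exact h3 _ hnd hne _
      · funext x
        cases x <;> simp [Function.update_apply]

/-- Key equivalence, for any modified graph `H` with the right successor behaviour. -/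
lemma key_iff [Fintype V] (H : SwitchGraph (Option V))
    (h1 : ∀ bb : Bool, H.succ (some d) bb = some d)
    (h2 : ∀ v : V, v ≠ d → G.DeadEnd d v → ∀ bb, H.succ (some v) bb = none)
    (h3 : ∀ v : V, v ≠ d → ¬ G.DeadEnd d v → ∀ bb, H.succ (some v) bb = some (G.succ v bb)) :
    G.Terminates o d ↔ ¬ H.Terminates (some o) none := by
  constructor
  · intro ht hT
    obtain ⟨k, hk⟩ := hT
    have hN : (G.run o d (Nat.find ht)).1 = d := Nat.find_spec ht
    set N := Nat.find ht with hNdef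
    have hmin : ∀ m < N, (G.run o d m).1 ≠ d := fun m hm => Nat.find_min ht hm
    have hnodead : ∀ n, ¬ G.DeadEnd d (G.run o d n).1 := not_deadEnd_of_terminates G o d ht
    have hmirror : ∀ n ≤ N, H.run (some o) none n =
        (some (G.run o d n).1, fun x => Option.elim x false (G.run o d n).2) :=
      fun n hn => mirror G o d H h1 h3 n
        (fun m hm => ⟨hmin m (lt_of_lt_of_le hm hn), hnodead m⟩)
    have hstay : ∀ j, (H.run (some o) none (N + j)).1 = some d := by
      intro j
      induction j with
      | zero => rw [Nat.add_zero, hmirror N le_rfl, hN]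
      | succ j ih =>
          have : N + (j + 1) = (N + j) + 1 := rfl
          rw [this, run_succ', if_neg (by rw [ih]; simp)]
          show H.succ _ _ = some d
          rw [ih]
          exact h1 _
    have : ∀ n, (H.run (some o) none n).1 ≠ none := by
      intro n
      rcases lt_or_ge n N with h | h
      · rw [hmirror n (le_of_lt h)]; simp
      · have := hstay (n - N)
        rw [Nat.add_sub_cancel' h] at this
        rw [this]; simp
    exact this k hk
  · intro hnotH
    by_contra hntG
    apply hnotH
    have hde := exists_deadEnd_of_not_terminates G o d hntG
    have hspec : G.DeadEnd d (G.run o d (Nat.find hde)).1 := Nat.find_spec hde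
    set n := Nat.find hde with hndef
    have hmin : ∀ m < n, ¬ G.DeadEnd d (G.run o d m).1 := fun m hm => Nat.find_min hde hm
    have hnd : ∀ m, (G.run o d m).1 ≠ d := fun m h => hntG ⟨m, h⟩
    have hm := mirror G o d H h1 h3 n (fun m hm => ⟨hnd m, hmin m hm⟩)
    refine ⟨n + 1, ?_⟩
    rw [run_succ', if_neg (by rw [hm]; simp)]
    show H.succ (H.run (some o) none n).1 _ = none
    rw [hm]
    exact h2 _ (hnd n) hspec _

end Aux

/-- Adding a new destination `d̄` (= `none`), redirecting both successors of every dead end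
to `d̄`, installing a self-loop at the old destination `d`, and leaving everything else
unchanged (the successors of `d̄` itself being arbitrary), yields a switch graph in which
the run terminates iff the original run does not. -/
theorem stmt14 {V : Type} [Fintype V] [DecidableEq V] (G : SwitchGraph V) (o d : V)
    (hod : o ≠ d) (a b : Option V) :
    G.Terminates o d ↔
      ¬ SwitchGraph.Terminates
        { s0 := fun x => match x with
            | none => a
            | some v => if v = d then some d
                else if G.DeadEnd d v then none else some (G.s0 v),
          s1 := fun x => match x with
            | none => b
            | some v => if v = d then some d
                else if G.DeadEnd d v then none else some (G.s1 v) }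
        (some o) none := by
  refine key_iff G o d _ ?_ ?_ ?_
  · intro bb
    cases bb <;> simp [SwitchGraph.succ]
  · intro v hvd hdead bb
    cases bb <;> · show (if v = d then some d else if G.DeadEnd d v then none else _) = none
                   rw [if_neg hvd, if_pos hdead]
  · intro v hvd hne bb
    cases bb <;> · show (if v = d then some d else if G.DeadEnd d v then none else _) = _
                   rw [if_neg hvd, if_neg hne]
                   rfl
end
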